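/- Let Γ = (m_{i,j})_{i,j∈I} be a Coxeter matrix of small type, B⁺ its Artin-Tits monoid, Ω a set, b ↦ R_b a monoid homomorphism from B⁺ to the monoid Bin(Ω) of binary relations on Ω, and (α_i)_{i∈I} a family of elements of Ω such that: (i) α_i ∉ R_{s_i}(Ω); (ii) if i ≠ j then α_i R_{s_j} α_i; (iii) if m_{i,j} = 3 then α_i (R_{s_j}R_{s_i}) α_j. Then for every b ∈ B⁺ and i ∈ I: s_i ≼ b if and only if α_i ∉ R_b(Ω). In particular, for b, b' ∈ B⁺, R_b(Ω) = R_{b'}(Ω) implies I(b) = I(b'). -/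

import Mathlib

set_option maxRecDepth 4000

namespace LK

/-! ### Coxeter matrices -/

/-- A Coxeter matrix on an index set `I` (entry `0` encodes `∞`). -/
structure CoxM (I : Type) where
  m : I → I → ℕ
  symm : ∀ i j, m i j = m j i
  one_iff : ∀ i j, m i j = 1 ↔ i = j

variable {I : Type}

/-- A Coxeter matrix is of small type if all its entries belong to `{1,2,3}`. -/
def CoxM.Small (M : CoxM I) : Prop := ∀ i j, M.m i j = 1 ∨ M.m i j = 2 ∨ M.m i j = 3

/-- The alternating word `i j i j ⋯` with `k` letters. -/
def braidList (k : ℕ) (i j : I) : List I :=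
  (List.range k).map (fun n => if n % 2 = 0 then i else j)

/-- The braid word `s_i s_j s_i ⋯` (`k` letters) in the free monoid. -/
def braidWord (k : ℕ) (i j : I) : FreeMonoid I := FreeMonoid.ofList (braidList k i j)

/-- The braid relations defining the Artin–Tits monoid. -/
def artinRel (M : CoxM I) : FreeMonoid I → FreeMonoid I → Prop :=
  fun x y => ∃ i j, M.m i j ≠ 0 ∧ x = braidWord (M.m i j) i j ∧ y = braidWord (M.m i j) j i

/-- The congruence on the free monoid generated by the braid relations. -/
def artinCon (M : CoxM I) : Con (FreeMonoid I) := conGen (artinRel M)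

/-- The Artin–Tits monoid `B⁺` of a Coxeter matrix. -/
def AM (M : CoxM I) := (artinCon M).Quotient

instance (M : CoxM I) : Monoid (AM M) := inferInstanceAs (Monoid (artinCon M).Quotient)

/-- The standard generators of the Artin–Tits monoid. -/
def gen (M : CoxM I) (i : I) : AM M := (artinCon M).mk' (FreeMonoid.of i)

/-- `I(b) = {i ∈ I ∣ s_i ≼ b}`, where `≼` is left divisibility. -/
def IdxSet (M : CoxM I) (x : AM M) : Set I := {i | gen M i ∣ x}

/-- The braid word `s_i s_j s_i ⋯` (`k` letters) in the free group. -/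
def braidWordG (k : ℕ) (i j : I) : FreeGroup I := ((braidList k i j).map FreeGroup.of).prod

/-- The braid relators defining the Artin–Tits group. -/
def artinGRels (M : CoxM I) : Set (FreeGroup I) :=
  {r | ∃ i j, M.m i j ≠ 0 ∧ r = braidWordG (M.m i j) i j * (braidWordG (M.m i j) j i)⁻¹}

/-- The Artin–Tits group `B` of a Coxeter matrix. -/
def AG (M : CoxM I) := PresentedGroup (artinGRels M)

instance (M : CoxM I) : Group (AG M) := inferInstanceAs (Group (PresentedGroup _))

/-- The standard generators of the Artin–Tits group. -/
def ggen (M : CoxM I) (i : I) : AG M := PresentedGroup.of i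

/-- The relators defining the Coxeter group. -/
def coxRels (M : CoxM I) : Set (FreeGroup I) :=
  {r | ∃ i j, M.m i j ≠ 0 ∧ r = (FreeGroup.of i * FreeGroup.of j) ^ (M.m i j)}

/-- The Coxeter group `W` of a Coxeter matrix. -/
def CoxG (M : CoxM I) := PresentedGroup (coxRels M)

instance (M : CoxM I) : Group (CoxG M) := inferInstanceAs (Group (PresentedGroup _))

/-- A Coxeter matrix is spherical if its Coxeter group is finite. -/
def Spherical (M : CoxM I) : Prop := Finite (CoxG M)

/-- Connectedness of the Coxeter graph: there is an edge between `i` and `j`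
iff `m i j ∉ {1,2}`. -/
def Connected (M : CoxM I) : Prop :=
  ∀ i j : I, Relation.ReflTransGen (fun a b => M.m a b ≠ 1 ∧ M.m a b ≠ 2) i j

/-- Restriction of a Coxeter matrix to a subset of the index set. -/
def CoxM.restrictF [DecidableEq I] (M : CoxM I) (J : Finset I) : CoxM {i // i ∈ J} :=
  ⟨fun i j => M.m i j, fun i j => M.symm i j,
   fun i j => (M.one_iff i j).trans (by exact Subtype.coe_inj)⟩

/-- An irreducible affine Coxeter matrix: connected, non-spherical, but every proper
parabolic submatrix is spherical. -/
def Affine [Fintype I] [DecidableEq I] (M : CoxM I) : Prop :=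
  Connected M ∧ ¬ Spherical M ∧ ∀ J : Finset I, J ≠ Finset.univ → Spherical (M.restrictF J)

/-! ### The standard root system -/

section Roots

variable [Fintype I] [DecidableEq I]

/-- The coefficients `-2 cos (π / m i j)` of the standard bilinear form. -/
noncomputable def cf (M : CoxM I) (i j : I) : ℝ := -2 * Real.cos (Real.pi / (M.m i j : ℝ))

/-- The standard symmetric bilinear form `( · | · )` on `E = ⊕ ℝ α_i`. -/
noncomputable def bform (M : CoxM I) (x y : I → ℝ) : ℝ := ∑ i, ∑ j, x i * y j * cf M i j

/-- The simple root `α_i`. -/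
def sroot (i : I) : I → ℝ := Pi.single i 1

/-- The simple reflection `s_i` acting on `E`. -/
noncomputable def srefl (M : CoxM I) (i : I) (v : I → ℝ) : I → ℝ :=
  v - bform M v (sroot i) • sroot i

/-- The roots: the orbit of the simple roots under the reflections. -/
inductive IsRoot (M : CoxM I) : (I → ℝ) → Prop
  | simple (i : I) : IsRoot M (sroot i)
  | srefl (i : I) (v : I → ℝ) : IsRoot M v → IsRoot M (LK.srefl M i v)

/-- The positive roots: roots with nonnegative coordinates. -/
def IsPos (M : CoxM I) (v : I → ℝ) : Prop := IsRoot M v ∧ ∀ i, 0 ≤ v i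

/-- The set `Φ⁺` of positive roots, as a type. -/
def Pos (M : CoxM I) := {v : I → ℝ // IsPos M v}

/-- The depth of a positive root: the least number of simple reflections needed to
send it to a negative vector. -/
noncomputable def dep (M : CoxM I) (v : I → ℝ) : ℕ :=
  sInf {n | ∃ l : List I, l.length = n ∧ ∃ k, l.foldr (srefl M) v k < 0}

theorem isPos_sroot (M : CoxM I) (i : I) : IsPos M (sroot i) :=
  ⟨IsRoot.simple i, fun j => by rw [sroot, Pi.single_apply]; split <;> norm_num⟩

/-- The simple root `α_i` as a positive root. -/
def simplePos (M : CoxM I) (i : I) : Pos M := ⟨sroot i, isPos_sroot M i⟩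

/-! ### The Lawrence–Krammer representation -/

variable (M : CoxM I) (R : Type) [CommRing R]

/-- The free module `V` with basis `(e_α)` indexed by the positive roots. -/
abbrev VV := Pos M →₀ R

/-- The basis vector `e_α` of `V`. -/
noncomputable def ev (α : Pos M) : VV M R := Finsupp.single α 1

open scoped Classical in
/-- The value of the map `φ_i` on the basis vector indexed by `α`. -/
noncomputable def phiAux (a b c d : R) (i : I) (α : Pos M) : VV M R :=
  if α.1 = sroot i then 0
  else if srefl M i α.1 = α.1 then d • ev M R α
  else if h : IsPos M (srefl M i α.1) then
    if dep M α.1 < dep M (srefl M i α.1) then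
      a • ev M R α + c • ev M R ⟨srefl M i α.1, h⟩
    else b • ev M R ⟨srefl M i α.1, h⟩
  else 0

/-- The linear map `φ_i : V → V`. -/
noncomputable def phi (a b c d : R) (i : I) : VV M R →ₗ[R] VV M R :=
  Finsupp.lift (VV M R) R (Pos M) (phiAux M R a b c d i)

/-- The linear map `ψ_i = φ_i + f_i ⊠ e_{α_i}`. -/
noncomputable def psim (a b c d : R) (f : I → (VV M R →ₗ[R] R)) (i : I) :
    VV M R →ₗ[R] VV M R :=
  phi M R a b c d i + (f i).smulRight (ev M R (simplePos M i))

/-- LK-families. -/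
structure IsLK (a b c d : R) (f : I → (VV M R →ₗ[R] R)) : Prop where
  diag : ∀ i j, i ≠ j → f i (ev M R (simplePos M j)) = 0
  rel2 : ∀ i j, M.m i j = 2 → (f i).comp (phi M R a b c d j) = d • f i
  rel3 : ∀ i j, M.m i j = 3 →
    (f i).comp (phi M R a b c d j) = (f j).comp (phi M R a b c d i)

/-- The `R`-module `𝓕` of LK-families. -/
noncomputable def LKFamilies (a b c d : R) : Submodule R (I → (VV M R →ₗ[R] R)) where
  carrier := {f | IsLK M R a b c d f}
  add_mem' := by
    rintro f g ⟨hf1, hf2, hf3⟩ ⟨hg1, hg2, hg3⟩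
    refine ⟨fun i j hij => ?_, fun i j hij => ?_, fun i j hij => ?_⟩
    · rw [Pi.add_apply, LinearMap.add_apply, hf1 i j hij, hg1 i j hij, add_zero]
    · simp only [Pi.add_apply, LinearMap.add_comp, hf2 i j hij, hg2 i j hij, smul_add]
    · simp only [Pi.add_apply, LinearMap.add_comp, hf3 i j hij, hg3 i j hij]
  zero_mem' := by
    refine ⟨fun i j hij => ?_, fun i j hij => ?_, fun i j hij => ?_⟩
    · rw [Pi.zero_apply, LinearMap.zero_apply]
    · simp only [Pi.zero_apply, LinearMap.zero_comp, smul_zero]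
    · simp only [Pi.zero_apply, LinearMap.zero_comp]
  smul_mem' := by
    rintro r f ⟨h1, h2, h3⟩
    refine ⟨fun i j hij => ?_, fun i j hij => ?_, fun i j hij => ?_⟩
    · rw [Pi.smul_apply, LinearMap.smul_apply, h1 i j hij, smul_zero]
    · rw [Pi.smul_apply, LinearMap.smul_comp, h2 i j hij]; exact smul_comm r d (f i)
    · simp only [Pi.smul_apply, LinearMap.smul_comp, h3 i j hij]

end Roots

/-! ### The monoid of binary relations -/

/-- The monoid of binary relations on a set `Ω`, where `β (R * S) α ↔ ∃ γ, β R γ ∧ γ S α`. -/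
def Bin (Ω : Type) := Ω → Ω → Prop

instance (Ω : Type) : Monoid (Bin Ω) where
  mul T S := fun x z => ∃ y, T x y ∧ S y z
  one := fun x y => x = y
  mul_assoc T S U := by
    funext x z
    apply propext
    constructor
    · rintro ⟨y, ⟨u, hTu, hSu⟩, hU⟩; exact ⟨u, hTu, y, hSu, hU⟩
    · rintro ⟨u, hT, y, hS, hU⟩; exact ⟨y, ⟨u, hT, hS⟩, hU⟩
  one_mul T := by
    funext x z
    apply propext
    constructor
    · rintro ⟨y, rfl, h⟩; exact h
    · intro h; exact ⟨x, rfl, h⟩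
  mul_one T := by
    funext x z
    apply propext
    constructor
    · rintro ⟨y, h, rfl⟩; exact h
    · intro h; exact ⟨z, h, rfl⟩

/-- `R(Ψ) = {β ∈ Ω ∣ ∃ α ∈ Ψ, β R α}`. -/
def Bin.image {Ω : Type} (T : Bin Ω) (Ψ : Set Ω) : Set Ω := {x | ∃ y ∈ Ψ, T x y}

/-! ### Further constructions -/

section More

variable [Fintype I] [DecidableEq I]

/-- The map `μ : 𝓕 → 𝔯` in the spherical case. -/
noncomputable def muSph (M : CoxM I) (R : Type) [CommRing R] (a b c d : R) (i0 : I) :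
    LKFamilies M R a b c d →ₗ[R] R where
  toFun f := f.1 i0 (ev M R (simplePos M i0))
  map_add' f g := rfl
  map_smul' r f := rfl

/-- A graph automorphism of a Coxeter matrix. -/
def IsAut (M : CoxM I) (g : Equiv.Perm I) : Prop := ∀ i j, M.m (g i) (g j) = M.m i j

/-- The action of a permutation of `I` on `E = ⊕ ℝ α_i`, sending `α_i` to `α_{g(i)}`. -/
def permE (g : Equiv.Perm I) (v : I → ℝ) : I → ℝ := fun i => v (g.symm i)

open scoped Classical in
/-- The element of `Φ⁺` with given coordinates (junk value if the vector is not
a positive root). -/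
noncomputable def posOf (M : CoxM I) [Nonempty I] (v : I → ℝ) : Pos M :=
  if h : IsPos M v then ⟨v, h⟩ else simplePos M (Classical.arbitrary I)

/-- The action of a permutation of `I` on `Φ⁺`. -/
noncomputable def permPos (M : CoxM I) [Nonempty I] (g : Equiv.Perm I) (α : Pos M) : Pos M :=
  posOf M (permE g α.1)

/-- The action of a permutation of `I` on `V`, permuting the basis `(e_α)`. -/
noncomputable def permV (M : CoxM I) (R : Type) [CommRing R] [Nonempty I] (g : Equiv.Perm I) :
    VV M R →ₗ[R] VV M R :=
  Finsupp.lmapDomain R R (permPos M g)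

/-- The submodule `V^G` of fixed points of `V` under a group `G` of permutations of `I`. -/
noncomputable def fixedV (M : CoxM I) (R : Type) [CommRing R] [Nonempty I]
    (G : Subgroup (Equiv.Perm I)) : Submodule R (VV M R) where
  carrier := {v | ∀ g ∈ G, permV M R g v = v}
  add_mem' hx hy g hg := by rw [map_add, hx g hg, hy g hg]
  zero_mem' g hg := map_zero _
  smul_mem' r v hv g hg := by rw [map_smul, hv g hg]

/-- The submonoid `(B⁺)^G` of fixed points of the Artin–Tits monoid under a group `G`
of permutations of `I` (acting via `actB`). -/
def fixedB (M : CoxM I) (actB : Equiv.Perm I → (AM M →* AM M))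
    (G : Subgroup (Equiv.Perm I)) : Submonoid (AM M) where
  carrier := {x | ∀ g ∈ G, actB g x = x}
  one_mem' g hg := map_one _
  mul_mem' hx hy g hg := by rw [map_mul, hx g hg, hy g hg]

/-- The map `μ : 𝓕 → 𝔯^ℕ` in the affine case, defined from the data of the imaginary
root `δ` and of a pair `(i0, j0)` with `m i0 j0 = 3`. -/
noncomputable def muAff (M : CoxM I) (R : Type) [CommRing R] [Nonempty I] (b c d : R)
    (δ : I → ℝ) (i0 j0 : I) (f : I → (VV M R →ₗ[R] R)) : ℕ → R := fun n =>
  if n % 2 = 0 then f i0 (ev M R (posOf M ((n / 2 : ℕ) • δ + sroot i0)))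
  else
    c * d * f i0 (ev M R (posOf M (((n + 1) / 2 : ℕ) • δ - sroot i0)))
      - b * c * f i0 (ev M R (posOf M (((n + 1) / 2 : ℕ) • δ - sroot i0 - sroot j0)))
      - d * d * f j0 (ev M R (posOf M (((n + 1) / 2 : ℕ) • δ - sroot i0 - sroot j0)))

end More

end LK


namespace LK

section Aux

variable {I : Type} {M : CoxM I}

theorem Bin.mul_apply {Omega : Type} (T S : Bin Omega) (x z : Omega) :
    (T * S) x z ↔ ∃ y, T x y ∧ S y z := Iff.rfl

/-- Length homomorphism on the free monoid. -/
def lenHom (I : Type) : FreeMonoid I →* Multiplicative ℕ where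
  toFun w := Multiplicative.ofAdd w.length
  map_one' := rfl
  map_mul' x y := by
    simp [FreeMonoid.length_mul, ofAdd_add]

theorem braidList_length (k : ℕ) (i j : I) : (braidList k i j).length = k := by
  simp [braidList]

theorem len_ofList (l : List I) : (FreeMonoid.ofList l).length = l.length := rfl

theorem artinCon_le_ker : artinCon M ≤ Con.ker (lenHom I) := by
  apply Con.conGen_le.mpr
  rintro x y ⟨i, j, hm, rfl, rfl⟩
  show lenHom I _ = lenHom I _
  simp only [lenHom, braidWord, MonoidHom.coe_mk, OneHom.coe_mk]
  show Multiplicative.ofAdd (FreeMonoid.ofList _).length = Multiplicative.ofAdd (FreeMonoid.ofList _).length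
  congr 1
  show (braidList (M.m i j) i j).length = (braidList (M.m i j) j i).length
  rw [braidList_length, braidList_length]

/-- Length function on the Artin monoid. -/
noncomputable def ell (b : AM M) : ℕ :=
  Multiplicative.toAdd (((artinCon M).lift (lenHom I) artinCon_le_ker) b)

theorem ell_mul (a b : AM M) : ell (a * b) = ell a + ell b := by
  simp only [ell]
  erw [map_mul]
  rfl

theorem ell_gen (i : I) : ell (gen M i) = 1 := by
  simp [ell, gen, Con.lift_mk', lenHom, FreeMonoid.length]

/-- The element of the Artin monoid represented by a word. -/
def wd (M : CoxM I) (l : List I) : AM M := (artinCon M).mk' (FreeMonoid.ofList l)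

theorem wd_nil : wd M ([] : List I) = 1 := map_one _

theorem wd_cons (j : I) (l : List I) : wd M (j :: l) = gen M j * wd M l := rfl


theorem exists_wd (b : AM M) : ∃ l : List I, wd M l = b := by
  obtain ⟨w, hw⟩ := Con.mk'_surjective (c := artinCon M) b
  exact ⟨FreeMonoid.toList w, by rw [wd, FreeMonoid.ofList_toList]; exact hw⟩

theorem braidList_two (i j : I) : braidList 2 i j = [i, j] := by
  simp [braidList, List.range_succ]

theorem braidList_three (i j : I) : braidList 3 i j = [i, j, i] := by
  simp [braidList, List.range_succ]

theorem gen_rel {i j : I} (h : M.m i j ≠ 0) :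
    wd M (braidList (M.m i j) i j) = wd M (braidList (M.m i j) j i) := by
  apply Quotient.sound
  exact ConGen.Rel.of _ _ ⟨i, j, h, rfl, rfl⟩

theorem gen_comm {i j : I} (h : M.m i j = 2) :
    gen M i * gen M j = gen M j * gen M i := by
  have := gen_rel (M := M) (i := i) (j := j) (by omega)
  rw [h, braidList_two, braidList_two] at this
  simpa [wd_cons, wd_nil, mul_assoc] using this

theorem gen_braid3 {i j : I} (h : M.m i j = 3) :
    gen M i * (gen M j * gen M i) = gen M j * (gen M i * gen M j) := by
  have := gen_rel (M := M) (i := i) (j := j) (by omega)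
  rw [h, braidList_three, braidList_three] at this
  simpa [wd_cons, wd_nil, mul_assoc] using this

end Aux

end LK

open LK in
/-- divisibility detected by binary relations. -/
theorem statement_6 {I : Type} [Fintype I] [DecidableEq I] (M : CoxM I) (hsmall : M.Small)
    (Omega : Type) (Rh : AM M →* Bin Omega) (aI : I → Omega)
    (h1 : ∀ i : I, aI i ∉ Bin.image (Rh (gen M i)) Set.univ)
    (h2 : ∀ i j : I, i ≠ j → Rh (gen M j) (aI i) (aI i))
    (h3 : ∀ i j : I, M.m i j = 3 → (Rh (gen M j) * Rh (gen M i)) (aI i) (aI j)) :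
    (∀ (x : AM M) (i : I), gen M i ∣ x ↔ aI i ∉ Bin.image (Rh x) Set.univ) ∧
    (∀ x y : AM M,
      Bin.image (Rh x) Set.univ = Bin.image (Rh y) Set.univ → IdxSet M x = IdxSet M y) := by
  classical
  -- hard direction
  have key : ∀ n, ∀ b : AM M, ell b = n → ∀ i, ¬ gen M i ∣ b → ∃ y, Rh b (aI i) y := by
    intro n
    induction n using Nat.strong_induction_on with
    | _ n IH =>
      intro b hbn i hnd
      obtain ⟨l, hl⟩ := exists_wd b
      match l with
      | [] =>
        rw [wd_nil] at hl
        refine ⟨aI i, ?_⟩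
        rw [← hl, map_one]
        rfl
      | j :: l =>
        rw [wd_cons] at hl
        have hij : i ≠ j := by
          rintro rfl
          exact hnd ⟨wd M l, hl.symm⟩
        by_cases hdvd : gen M i ∣ wd M l
        · -- wd M l = gen i * c
          obtain ⟨c, hc⟩ := hdvd
          rcases hsmall i j with h1' | h2' | h3'
          · exact absurd ((M.one_iff i j).mp h1') hij
          · -- commuting case: gen i divides b, contradiction
            exfalso
            apply hnd
            refine ⟨gen M j * c, ?_⟩
            rw [← hl, hc, ← mul_assoc, ← gen_comm h2', mul_assoc]
          · -- braid case
            have hjc : ¬ gen M j ∣ c := by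
              rintro ⟨d, hd⟩
              apply hnd
              refine ⟨gen M j * (gen M i * d), ?_⟩
              rw [← hl, hc, hd, ← mul_assoc, ← mul_assoc, ← mul_assoc,
                ← mul_assoc]
              congr 1
              rw [mul_assoc, mul_assoc, ← gen_braid3 h3']
            have hellc : ell c < n := by
              have : n = ell (gen M j) + (ell (gen M i) + ell c) := by
                rw [← hbn, ← hl, hc, ell_mul, ell_mul]
              rw [ell_gen, ell_gen] at this
              omega
            obtain ⟨y, hy⟩ := IH (ell c) hellc c rfl j hjc
            obtain ⟨γ, hg1, hg2⟩ := h3 i j h3'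
            refine ⟨y, ?_⟩
            rw [← hl, hc, map_mul, map_mul]
            exact ⟨γ, hg1, aI j, hg2, hy⟩
        · have hell : ell (wd M l) < n := by
            have : n = ell (gen M j) + ell (wd M l) := by rw [← hbn, ← hl, ell_mul]
            rw [ell_gen] at this
            omega
          obtain ⟨y, hy⟩ := IH (ell (wd M l)) hell (wd M l) rfl i hdvd
          refine ⟨y, ?_⟩
          rw [← hl, map_mul]
          exact ⟨aI i, h2 i j hij, hy⟩
  have main : ∀ (x : AM M) (i : I), gen M i ∣ x ↔ aI i ∉ Bin.image (Rh x) Set.univ := by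
    intro x i
    constructor
    · rintro ⟨c, rfl⟩ ⟨y, -, hy⟩
      rw [map_mul] at hy
      obtain ⟨γ, hγ1, -⟩ := hy
      exact h1 i ⟨γ, Set.mem_univ γ, hγ1⟩
    · intro hni
      by_contra hnd
      obtain ⟨y, hy⟩ := key (ell x) x rfl i hnd
      exact hni ⟨y, Set.mem_univ y, hy⟩
  refine ⟨main, fun x y hxy => ?_⟩
  ext i
  simp only [IdxSet, Set.mem_setOf_eq, main x i, main y i, hxy]
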